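/- Let F be a finite subset of ℝ with the Euclidean metric. (i) If |F| = 3, then F has no focal points, dim_fH(F) = 1, and dim_fB(F) ≥ 1. (ii) If |F| ≥ 4, then F has no focal points and dim_fH(F) < 1. -/

import Mathlib

open Metric

namespace FinDim

variable {X : Type*} [MetricSpace X]

/-- `ν_F(a)`: the distance from `a` to a nearest other point of `F`. -/
noncomputable def nu (F : Finset X) (a : X) : ℝ :=
  sInf {r : ℝ | ∃ x ∈ F, x ≠ a ∧ r = dist a x}

/-- `δ(F)`: the separation of `F`, the minimum distance between distinct points. -/
noncomputable def sep (F : Finset X) : ℝ :=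
  sInf {r : ℝ | ∃ x ∈ F, ∃ y ∈ F, x ≠ y ∧ r = dist x y}

/-- A 2-covering of `F`: a family of subsets of `F` covering `F`,
each member having at least two elements. -/
def IsTwoCover (F : Finset X) (U : Finset (Finset X)) : Prop :=
  (∀ V ∈ U, V ⊆ F) ∧ (∀ V ∈ U, 2 ≤ V.card) ∧ ∀ a ∈ F, ∃ V ∈ U, a ∈ V

/-- `Δ(𝒰)`: maximum diameter of the members of the family `𝒰`. -/
noncomputable def coverDiam (U : Finset (Finset X)) : ℝ :=
  sSup {r : ℝ | ∃ V ∈ U, r = Metric.diam (V : Set X)}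

/-- `∇(F)`: the covering diameter of `F`. -/
noncomputable def nablaF (F : Finset X) : ℝ :=
  sInf {r : ℝ | ∃ U : Finset (Finset X), IsTwoCover F U ∧ r = coverDiam U}

/-- `a` is a focal point of `F`. -/
def IsFocal (F : Finset X) (a : X) : Prop :=
  a ∈ F ∧ ∀ x ∈ F, x ≠ a → dist a x = Metric.diam (F : Set X)

/-- `H^s_𝒰(F) = Σ_{U ∈ 𝒰} Δ(U)^s`. -/
noncomputable def Hcov (U : Finset (Finset X)) (s : ℝ) : ℝ :=
  ∑ V ∈ U, Metric.diam (V : Set X) ^ s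

/-- `H^s(F)`: minimum of `H^s_𝒰(F)` over 2-coverings `𝒰` with `Δ(𝒰) = ∇(F)`. -/
noncomputable def HH (F : Finset X) (s : ℝ) : ℝ :=
  sInf {h : ℝ | ∃ U : Finset (Finset X),
    IsTwoCover F U ∧ coverDiam U = nablaF F ∧ h = Hcov U s}

/-- The finite Hausdorff dimension: the unique `s₀ ∈ (0,∞)` with
`H^{s₀}(F) = Δ(F)^{s₀}` (when `F` has no focal points). -/
noncomputable def dimfH (F : Finset X) : ℝ :=
  sInf {s : ℝ | 0 < s ∧ HH F s = Metric.diam (F : Set X) ^ s}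

/-- `T_{∇(F)}(F)`: the minimal cardinality of a 2-covering `𝒰` with `Δ(𝒰) = ∇(F)`. -/
noncomputable def Tmin (F : Finset X) : ℕ :=
  sInf {n : ℕ | ∃ U : Finset (Finset X),
    IsTwoCover F U ∧ coverDiam U = nablaF F ∧ U.card = n}

/-- The finite box dimension `dim_fB(F) = ln T_{∇(F)}(F) / ln (Δ(F)/∇(F))`. -/
noncomputable def dimfB (F : Finset X) : ℝ :=
  Real.log (Tmin F) / Real.log (Metric.diam (F : Set X) / nablaF F)

/-- `ν_A(x)` for a subset `A` of a metric space. -/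
noncomputable def nuSet {Z : Type*} [MetricSpace Z] (A : Set Z) (x : Z) : ℝ :=
  sInf {r : ℝ | ∃ y ∈ A, y ≠ x ∧ r = dist x y}

/-- `∇(A) = sup {ν_A(x) : x ∈ A}` for a subset `A` of a metric space. -/
noncomputable def nablaSet {Z : Type*} [MetricSpace Z] (A : Set Z) : ℝ :=
  sSup {r : ℝ | ∃ x ∈ A, r = nuSet A x}

end FinDim

open FinDim

set_option linter.unusedSectionVars false
set_option maxHeartbeats 1000000

namespace Aux
variable {X : Type*} [MetricSpace X]

lemma twoCover_self {F : Finset X} (h2 : 2 ≤ F.card) : IsTwoCover F {F} :=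
  ⟨fun V hV => by simp_all, fun V hV => by simp_all,
   fun a ha => ⟨F, Finset.mem_singleton_self F, ha⟩⟩

lemma coverDiam_set_eq (U : Finset (Finset X)) :
    {r : ℝ | ∃ V ∈ U, r = Metric.diam (V : Set X)}
      = ↑(U.image (fun V : Finset X => Metric.diam (V : Set X))) := by
  ext r; simp [eq_comm]

lemma coverDiam_nonneg (U : Finset (Finset X)) : 0 ≤ coverDiam U :=
  Real.sSup_nonneg (by rintro r ⟨V, _, rfl⟩; exact diam_nonneg)

lemma diam_le_coverDiam {U : Finset (Finset X)} {V : Finset X} (hV : V ∈ U) :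
    Metric.diam (V : Set X) ≤ coverDiam U := by
  apply le_csSup
  · rw [coverDiam_set_eq]; exact (U.image _).finite_toSet.bddAbove
  · exact ⟨V, hV, rfl⟩

lemma coverDiam_le {U : Finset (Finset X)} {b : ℝ} (hb : 0 ≤ b)
    (h : ∀ V ∈ U, Metric.diam (V : Set X) ≤ b) : coverDiam U ≤ b :=
  Real.sSup_le (by rintro r ⟨V, hV, rfl⟩; exact h V hV) hb

lemma nabla_set_nonempty {F : Finset X} (h2 : 2 ≤ F.card) :
    {r : ℝ | ∃ U : Finset (Finset X), IsTwoCover F U ∧ r = coverDiam U}.Nonempty :=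
  ⟨coverDiam {F}, {F}, twoCover_self h2, rfl⟩

lemma nabla_bddBelow (F : Finset X) :
    BddBelow {r : ℝ | ∃ U : Finset (Finset X), IsTwoCover F U ∧ r = coverDiam U} :=
  ⟨0, by rintro r ⟨U, _, rfl⟩; exact coverDiam_nonneg U⟩

lemma nabla_nonneg (F : Finset X) : 0 ≤ nablaF F :=
  Real.sInf_nonneg (by rintro r ⟨U, _, rfl⟩; exact coverDiam_nonneg U)

lemma nabla_le_coverDiam {F : Finset X} {U : Finset (Finset X)} (hU : IsTwoCover F U) :
    nablaF F ≤ coverDiam U :=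
  csInf_le (nabla_bddBelow F) ⟨U, hU, rfl⟩

lemma exists_ne_of_two_le_card {V : Finset X} (h2 : 2 ≤ V.card) {y : X} (hy : y ∈ V) :
    ∃ z ∈ V, z ≠ y := by
  obtain ⟨z, hz, hzy⟩ := Finset.exists_mem_ne (s := V) (by omega) y
  exact ⟨z, hz, hzy⟩

lemma nabla_ge {F : Finset X} {y : X} {r : ℝ} (h2 : 2 ≤ F.card) (hy : y ∈ F)
    (hr : ∀ z ∈ F, z ≠ y → r ≤ dist y z) : r ≤ nablaF F := by
  apply le_csInf (nabla_set_nonempty h2)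
  rintro ρ ⟨U, hU, rfl⟩
  obtain ⟨V, hVU, hyV⟩ := hU.2.2 y hy
  obtain ⟨z, hzV, hzy⟩ := exists_ne_of_two_le_card (hU.2.1 V hVU) hyV
  calc r ≤ dist y z := hr z (hU.1 V hVU hzV) hzy
    _ = dist z y := dist_comm _ _
    _ ≤ Metric.diam (V : Set X) :=
        dist_le_diam_of_mem (V.finite_toSet.isBounded) hzV hyV
    _ ≤ coverDiam U := diam_le_coverDiam hVU

lemma diam_finset_pos {V : Finset X} (h2 : 2 ≤ V.card) : 0 < Metric.diam (V : Set X) := by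
  obtain ⟨y, hy⟩ := (Finset.card_pos (s := V)).mp (by omega)
  obtain ⟨z, hz, hzy⟩ := exists_ne_of_two_le_card h2 hy
  calc (0:ℝ) < dist z y := dist_pos.mpr hzy
    _ ≤ _ := dist_le_diam_of_mem (V.finite_toSet.isBounded) hz hy

lemma sum_image_le {α β : Type*} [DecidableEq β] (s : Finset α) (g : α → β) (f : β → ℝ)
    (hf : ∀ b, 0 ≤ f b) : ∑ b ∈ s.image g, f b ≤ ∑ a ∈ s, f (g a) := by
  classical
  induction s using Finset.induction with
  | empty => simp
  | insert _ _ ha ih =>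
    rename_i a s
    rw [Finset.image_insert, Finset.sum_insert ha]
    by_cases h : g a ∈ s.image g
    · rw [Finset.insert_eq_self.mpr h]
      linarith [hf (g a)]
    · rw [Finset.sum_insert h]; linarith

end Aux


namespace Aux2

noncomputable def pt (F : Finset ℝ) {n : ℕ} (h : F.card = n) (i : ℕ) : ℝ :=
  if hi : i < n then F.orderEmbOfFin h ⟨i, hi⟩ else 0

variable {F : Finset ℝ} {n : ℕ}

lemma pt_mem (h : F.card = n) {i : ℕ} (hi : i < n) : pt F h i ∈ F := by
  rw [pt, dif_pos hi]; exact Finset.orderEmbOfFin_mem F h _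

lemma pt_lt (h : F.card = n) {i j : ℕ} (hij : i < j) (hj : j < n) :
    pt F h i < pt F h j := by
  rw [pt, pt, dif_pos hj, dif_pos (lt_trans hij hj)]
  exact (F.orderEmbOfFin h).strictMono (by simpa using hij)

lemma pt_le (h : F.card = n) {i j : ℕ} (hij : i ≤ j) (hj : j < n) :
    pt F h i ≤ pt F h j := by
  rcases eq_or_lt_of_le hij with rfl | hlt
  · exact le_refl _
  · exact (pt_lt h hlt hj).le

lemma pt_ne (h : F.card = n) {i j : ℕ} (hij : i ≠ j) (hi : i < n) (hj : j < n) :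
    pt F h i ≠ pt F h j := by
  rcases hij.lt_or_gt with hlt | hlt
  · exact (pt_lt h hlt hj).ne
  · exact (pt_lt h hlt hi).ne'

lemma pt_surj (h : F.card = n) {y : ℝ} (hy : y ∈ F) : ∃ i, ∃ _ : i < n, pt F h i = y := by
  have : y ∈ Set.range (F.orderEmbOfFin h) := by
    rw [Finset.range_orderEmbOfFin]; exact hy
  obtain ⟨⟨i, hi⟩, hiy⟩ := this
  exact ⟨i, hi, by rw [pt, dif_pos hi]; exact hiy⟩

lemma pt_zero (h : F.card = n) (hn : 0 < n) (hne : F.Nonempty) : pt F h 0 = F.min' hne := by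
  rw [pt, dif_pos hn]; exact Finset.orderEmbOfFin_zero h hn

lemma pt_last (h : F.card = n) (hn : 0 < n) (hne : F.Nonempty) :
    pt F h (n-1) = F.max' hne := by
  rw [pt, dif_pos (by omega)]; exact Finset.orderEmbOfFin_last h hn

lemma diam_coe (hne : F.Nonempty) :
    Metric.diam (F : Set ℝ) = F.max' hne - F.min' hne := by
  apply le_antisymm
  · apply diam_le_of_forall_dist_le
    · simp [sub_nonneg, F.min'_le _ (F.max'_mem hne)]
    · intro x hx y hy
      rw [Real.dist_eq, abs_sub_le_iff]
      have h1 := F.le_max' y (by exact_mod_cast hy)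
      have h2 := F.min'_le x (by exact_mod_cast hx)
      have h3 := F.le_max' x (by exact_mod_cast hx)
      have h4 := F.min'_le y (by exact_mod_cast hy)
      constructor <;> linarith
  · have h1 : dist (F.max' hne) (F.min' hne) ≤ Metric.diam (F : Set ℝ) :=
      dist_le_diam_of_mem F.finite_toSet.isBounded
        (by exact_mod_cast F.max'_mem hne) (by exact_mod_cast F.min'_mem hne)
    rw [Real.dist_eq] at h1
    calc F.max' hne - F.min' hne ≤ |F.max' hne - F.min' hne| := le_abs_self _
      _ ≤ _ := h1

lemma diam_F (h : F.card = n) (hn : 0 < n) (hne : F.Nonempty) :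
    Metric.diam (F : Set ℝ) = pt F h (n-1) - pt F h 0 := by
  rw [diam_coe hne, pt_zero h hn hne, pt_last h hn hne]

end Aux2


namespace Aux3
open Aux Aux2 FinDim

variable {F : Finset ℝ} {n : ℕ}

lemma pair_card (h : F.card = n) {i : ℕ} (hi : i + 1 < n) :
    ({pt F h i, pt F h (i+1)} : Finset ℝ).card = 2 :=
  Finset.card_pair (pt_ne h (by omega) (by omega) hi)

lemma pair_diam (h : F.card = n) {i : ℕ} (hi : i + 1 < n) :
    Metric.diam (({pt F h i, pt F h (i+1)} : Finset ℝ) : Set ℝ)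
      = pt F h (i+1) - pt F h i := by
  rw [Finset.coe_insert, Finset.coe_singleton, Metric.diam_pair, Real.dist_eq,
    abs_of_nonpos (by linarith [pt_lt h (Nat.lt_succ_self i) hi]), neg_sub]

lemma diam_le_Hcov_one {U : Finset (Finset ℝ)} {W : Finset ℝ} (hW : W ∈ U) :
    Metric.diam (W : Set ℝ) ≤ Hcov U 1 := by
  have h1 : Metric.diam (W : Set ℝ) ^ (1:ℝ) ≤ ∑ V ∈ U, Metric.diam (V : Set ℝ) ^ (1:ℝ) :=
    Finset.single_le_sum (fun V _ => Real.rpow_nonneg Metric.diam_nonneg 1) hW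
  rw [Real.rpow_one] at h1
  exact h1

lemma cover_of_edges (h : F.card = n) (hn : 2 ≤ n) (S : Finset ℕ)
    (hSsub : S ⊆ Finset.range (n-1))
    (hSgood : ∀ i ∈ S, pt F h (i+1) - pt F h i ≤ nablaF F)
    (hScover : ∀ k, k < n → ∃ i ∈ S, k = i ∨ k = i + 1) :
    ∃ U : Finset (Finset ℝ), IsTwoCover F U ∧ coverDiam U = nablaF F ∧
      Hcov U 1 ≤ ∑ i ∈ S, (pt F h (i+1) - pt F h i) := by
  classical
  set x := pt F h with hx
  have hSlt : ∀ i ∈ S, i + 1 < n := by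
    intro i hi; have := hSsub hi; simp only [Finset.mem_range] at this; omega
  refine ⟨S.image (fun i => ({x i, x (i+1)} : Finset ℝ)), ?_, ?_, ?_⟩
  · refine ⟨?_, ?_, ?_⟩
    · intro V hV
      obtain ⟨i, hiS, rfl⟩ := Finset.mem_image.mp hV
      intro z hz
      rcases Finset.mem_insert.mp hz with rfl | hz
      · exact pt_mem h (by have := hSlt i hiS; omega)
      · rw [Finset.mem_singleton.mp hz]; exact pt_mem h (hSlt i hiS)
    · intro V hV
      obtain ⟨i, hiS, rfl⟩ := Finset.mem_image.mp hV
      exact (pair_card h (hSlt i hiS)).ge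
    · intro a ha
      obtain ⟨k, hk, rfl⟩ := pt_surj h ha
      obtain ⟨i, hiS, hki⟩ := hScover k hk
      refine ⟨{x i, x (i+1)}, Finset.mem_image_of_mem _ hiS, ?_⟩
      rcases hki with rfl | rfl
      · exact Finset.mem_insert_self _ _
      · exact Finset.mem_insert_of_mem (Finset.mem_singleton_self _)
  · apply le_antisymm
    · apply coverDiam_le (nabla_nonneg F)
      intro V hV
      obtain ⟨i, hiS, rfl⟩ := Finset.mem_image.mp hV
      rw [pair_diam h (hSlt i hiS)]
      exact hSgood i hiS
    · apply nabla_le_coverDiam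
      refine ⟨?_, ?_, ?_⟩
      · intro V hV
        obtain ⟨i, hiS, rfl⟩ := Finset.mem_image.mp hV
        intro z hz
        rcases Finset.mem_insert.mp hz with rfl | hz
        · exact pt_mem h (by have := hSlt i hiS; omega)
        · rw [Finset.mem_singleton.mp hz]; exact pt_mem h (hSlt i hiS)
      · intro V hV
        obtain ⟨i, hiS, rfl⟩ := Finset.mem_image.mp hV
        exact (pair_card h (hSlt i hiS)).ge
      · intro a ha
        obtain ⟨k, hk, rfl⟩ := pt_surj h ha
        obtain ⟨i, hiS, hki⟩ := hScover k hk
        refine ⟨{x i, x (i+1)}, Finset.mem_image_of_mem _ hiS, ?_⟩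
        rcases hki with rfl | rfl
        · exact Finset.mem_insert_self _ _
        · exact Finset.mem_insert_of_mem (Finset.mem_singleton_self _)
  · unfold Hcov
    have h1 : ∀ V ∈ S.image (fun i => ({x i, x (i+1)} : Finset ℝ)),
        Metric.diam (V : Set ℝ) ^ (1:ℝ) = Metric.diam (V : Set ℝ) := by
      intro V _; exact Real.rpow_one _
    rw [Finset.sum_congr rfl h1]
    calc ∑ V ∈ S.image (fun i => ({x i, x (i+1)} : Finset ℝ)), Metric.diam (V : Set ℝ)
        ≤ ∑ i ∈ S, Metric.diam ((({x i, x (i+1)} : Finset ℝ)) : Set ℝ) :=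
          sum_image_le S _ _ (fun _ => Metric.diam_nonneg)
      _ = ∑ i ∈ S, (x (i+1) - x i) :=
          Finset.sum_congr rfl (fun i hiS => pair_diam h (hSlt i hiS))

lemma exists_good_cover (h : F.card = n) (hn : 4 ≤ n) :
    ∃ U : Finset (Finset ℝ), IsTwoCover F U ∧ coverDiam U = nablaF F ∧
      Hcov U 1 < Metric.diam (F : Set ℝ) ∧ nablaF F < Metric.diam (F : Set ℝ) := by
  classical
  set x := pt F h with hx
  set g : ℕ → ℝ := fun i => x (i+1) - x i with hg
  have hgpos : ∀ i, i + 1 < n → 0 < g i := fun i hi => sub_pos.mpr (pt_lt h (Nat.lt_succ_self i) hi)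
  have hDelta : Metric.diam (F : Set ℝ) = ∑ i ∈ Finset.range (n-1), g i := by
    rw [Finset.sum_range_sub (f := x), diam_F h (by omega)
      (Finset.card_pos.mp (by omega))]
  -- key : good edges are ≤ nabla
  have key : ∀ i, i + 1 < n →
      ((i = 0 ∨ g i ≤ g (i-1)) ∨ (i + 2 = n ∨ g i ≤ g (i+1))) → g i ≤ nablaF F := by
    intro i hi hgood
    rcases hgood with hL | hR
    · apply nabla_ge (by omega) (pt_mem h (by omega : i < n))
      intro z hz hzne
      obtain ⟨j, hj, rfl⟩ := pt_surj h hz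
      have hji : j ≠ i := fun e => hzne (by rw [e])
      rw [dist_comm, Real.dist_eq]
      rcases hji.lt_or_gt with hlt | hgt
      · -- j < i
        have hi1 : i - 1 + 1 = i := by omega
        have hgi : g i ≤ g (i-1) := hL.resolve_left (by omega)
        have h1 : x j ≤ x (i-1) := pt_le h (by omega) (by omega)
        have h2 : g (i-1) = x i - x (i-1) := by rw [hg]; simp only; rw [hi1]
        rw [abs_of_nonpos (by have := pt_le h hlt.le (by omega); linarith)]
        have := pt_le h hlt.le (by omega : i < n)
        linarith
      · -- i < j
        have h1 : x (i+1) ≤ x j := pt_le h (by omega) hj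
        rw [abs_of_nonneg (by have := pt_le h hgt.le hj; linarith)]
        have : g i = x (i+1) - x i := rfl
        linarith
    · apply nabla_ge (by omega) (pt_mem h hi)
      intro z hz hzne
      obtain ⟨j, hj, rfl⟩ := pt_surj h hz
      have hji : j ≠ i + 1 := fun e => hzne (by rw [e])
      rw [dist_comm, Real.dist_eq]
      rcases hji.lt_or_gt with hlt | hgt
      · -- j ≤ i
        have h1 : x j ≤ x i := pt_le h (by omega) (by omega)
        rw [abs_of_nonpos (by have := pt_le h (by omega : j ≤ i+1) hi; linarith)]
        have : g i = x (i+1) - x i := rfl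
        linarith
      · -- j ≥ i + 2
        have hgi : g i ≤ g (i+1) := hR.resolve_left (by omega)
        have h1 : x (i+2) ≤ x j := pt_le h (by omega) hj
        have h2 : g (i+1) = x (i+2) - x (i+1) := rfl
        rw [abs_of_nonneg (by have := pt_le h hgt.le hj; linarith)]
        linarith
  by_cases hall : ∀ i ∈ Finset.range (n-1),
      ((i = 0 ∨ g i ≤ g (i-1)) ∨ (i + 2 = n ∨ g i ≤ g (i+1)))
  · -- all good : drop edge 1
    set S := (Finset.range (n-1)).erase 1 with hS
    have hSsub : S ⊆ Finset.range (n-1) := Finset.erase_subset _ _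
    have hsum : ∑ i ∈ S, g i < Metric.diam (F : Set ℝ) := by
      rw [hDelta, ← Finset.sum_erase_add _ _ (show 1 ∈ Finset.range (n-1) by
        simp only [Finset.mem_range]; omega)]
      have := hgpos 1 (by omega)
      linarith
    obtain ⟨U, hU1, hU2, hU3⟩ := cover_of_edges h (by omega) S hSsub
      (fun i hi => key i (by have := hSsub hi; simp only [Finset.mem_range] at this; omega)
        (hall i (hSsub hi)))
      (by
        intro k hk
        rcases Nat.lt_or_ge k 1 with h0 | h0
        · exact ⟨0, by simp only [hS, Finset.mem_erase, Finset.mem_range]; omega, by omega⟩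
        rcases Nat.lt_or_ge k 2 with h1 | h1
        · exact ⟨0, by simp only [hS, Finset.mem_erase, Finset.mem_range]; omega, by omega⟩
        rcases Nat.lt_or_ge k 3 with h2 | h2
        · exact ⟨2, by simp only [hS, Finset.mem_erase, Finset.mem_range]; omega, by omega⟩
        · exact ⟨k - 1, by simp only [hS, Finset.mem_erase, Finset.mem_range]; omega, by omega⟩)
    refine ⟨U, hU1, hU2, lt_of_le_of_lt hU3 hsum, ?_⟩
    rw [← hU2]
    rcases Finset.eq_empty_or_nonempty U with rfl | ⟨V, hV⟩
    · obtain ⟨V, hV, _⟩ := hU1.2.2 (x 0) (pt_mem h (by omega)); simp at hV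
    · calc coverDiam U ≤ ∑ i ∈ S, g i := by
            apply coverDiam_le (by
              apply Finset.sum_nonneg
              intro i hi
              have := Finset.mem_range.mp (hSsub hi)
              exact (hgpos i (by omega)).le)
            intro W hW
            exact le_trans (diam_le_Hcov_one hW) hU3
        _ < _ := hsum
  · obtain ⟨j, hj⟩ := not_forall.mp hall
    rw [Classical.not_imp] at hj
    obtain ⟨hjmem, hjbad⟩ := hj
    simp only [Finset.mem_range] at hjmem
    set S := (Finset.range (n-1)).filter
      (fun i => ((i = 0 ∨ g i ≤ g (i-1)) ∨ (i + 2 = n ∨ g i ≤ g (i+1)))) with hS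
    have hSsub : S ⊆ Finset.range (n-1) := Finset.filter_subset _ _
    have hjS : j ∉ S := by
      intro hj; exact hjbad (Finset.mem_filter.mp hj).2
    have hsum : ∑ i ∈ S, g i < Metric.diam (F : Set ℝ) := by
      have hsub : S ⊆ (Finset.range (n-1)).erase j := by
        intro i hi
        exact Finset.mem_erase.mpr ⟨fun e => hjS (e ▸ hi), hSsub hi⟩
      calc ∑ i ∈ S, g i ≤ ∑ i ∈ (Finset.range (n-1)).erase j, g i :=
            Finset.sum_le_sum_of_subset_of_nonneg hsub (fun i hi _ => by
              have := Finset.mem_range.mp (Finset.mem_of_mem_erase hi)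
              exact (hgpos i (by omega)).le)
        _ < Metric.diam (F : Set ℝ) := by
            rw [hDelta, ← Finset.sum_erase_add _ _ (show j ∈ Finset.range (n-1) by
              simp only [Finset.mem_range]; omega)]
            have := hgpos j (by omega)
            linarith
    obtain ⟨U, hU1, hU2, hU3⟩ := cover_of_edges h (by omega) S hSsub
      (fun i hi => key i (by have := hSsub hi; simp only [Finset.mem_range] at this; omega)
        (Finset.mem_filter.mp hi).2)
      (by
        intro k hk
        rcases Nat.eq_zero_or_pos k with rfl | hk0
        · exact ⟨0, Finset.mem_filter.mpr ⟨Finset.mem_range.mpr (by omega),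
            Or.inl (Or.inl rfl)⟩, Or.inl rfl⟩
        rcases Nat.lt_or_ge k (n-1) with hkn | hkn
        · by_cases hc : g (k-1) ≤ g k
          · refine ⟨k-1, Finset.mem_filter.mpr ⟨Finset.mem_range.mpr (by omega),
              Or.inr (Or.inr ?_)⟩, Or.inr (by omega)⟩
            have hkk : k - 1 + 1 = k := by omega
            rw [hkk]; exact hc
          · exact ⟨k, Finset.mem_filter.mpr ⟨Finset.mem_range.mpr (by omega),
              Or.inl (Or.inr (le_of_lt (lt_of_not_ge hc)))⟩, Or.inl rfl⟩
        · refine ⟨n-2, Finset.mem_filter.mpr ⟨Finset.mem_range.mpr (by omega),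
            Or.inr (Or.inl (by omega))⟩, Or.inr (by omega)⟩)
    refine ⟨U, hU1, hU2, lt_of_le_of_lt hU3 hsum, ?_⟩
    rw [← hU2]
    calc coverDiam U ≤ ∑ i ∈ S, g i := by
          apply coverDiam_le (by
            apply Finset.sum_nonneg
            intro i hi
            have := Finset.mem_range.mp (hSsub hi)
            exact (hgpos i (by omega)).le)
          intro W hW
          exact le_trans (diam_le_Hcov_one hW) hU3
      _ < _ := hsum

end Aux3


namespace Aux4
open Aux Aux2 Aux3 FinDim

lemma no_focal_of_four {F : Finset ℝ} (h4 : 4 ≤ F.card) (a : ℝ) : ¬ IsFocal F a := by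
  rintro ⟨haF, hfoc⟩
  set D := Metric.diam (F : Set ℝ) with hD
  have h1 : 0 < (F.erase a).card := by rw [Finset.card_erase_of_mem haF]; omega
  obtain ⟨x, hx⟩ := Finset.card_pos.mp h1
  have h2 : 0 < ((F.erase a).erase x).card := by
    rw [Finset.card_erase_of_mem hx, Finset.card_erase_of_mem haF]; omega
  obtain ⟨y, hy⟩ := Finset.card_pos.mp h2
  have h3 : 0 < (((F.erase a).erase x).erase y).card := by
    rw [Finset.card_erase_of_mem hy, Finset.card_erase_of_mem hx,
      Finset.card_erase_of_mem haF]; omega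
  obtain ⟨z, hz⟩ := Finset.card_pos.mp h3
  simp only [Finset.mem_erase] at hx hy hz
  have key : ∀ w : ℝ, w ∈ F → w ≠ a → w = a - D ∨ w = a + D := by
    intro w hwF hwa
    have h' := hfoc w hwF hwa
    rw [Real.dist_eq] at h'
    rcases (abs_eq (hD ▸ Metric.diam_nonneg)).mp h' with h'' | h''
    · left; linarith
    · right; linarith
  have hx' := key x hx.2 hx.1
  have hy' := key y hy.2.2 hy.2.1
  have hz' := key z hz.2.2.2 hz.2.2.1
  rcases hx' with rfl | rfl <;> rcases hy' with rfl | rfl <;> rcases hz' with rfl | rfl <;>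
    simp_all

lemma exists_min_dist {F : Finset ℝ} (h2 : 2 ≤ F.card) :
    ∃ c : ℝ, 0 < c ∧ ∀ V : Finset ℝ, V ⊆ F → 2 ≤ V.card → c ≤ Metric.diam (V : Set ℝ) := by
  classical
  set P := (F ×ˢ F).filter (fun p => p.1 ≠ p.2) with hP
  have hPne : P.Nonempty := by
    obtain ⟨u, hu⟩ := Finset.card_pos.mp (by omega : 0 < F.card)
    obtain ⟨v, hv, hvu⟩ := exists_ne_of_two_le_card h2 hu
    exact ⟨(v, u), by simp [hP, hu, hv, hvu]⟩
  have hQne : (P.image (fun p => dist p.1 p.2)).Nonempty := hPne.image _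
  set c := (P.image (fun p => dist p.1 p.2)).min' hQne with hc
  have hcpos : 0 < c := by
    have := Finset.min'_mem _ hQne
    rw [← hc] at this
    obtain ⟨p, hp, hpc⟩ := Finset.mem_image.mp this
    have hne : p.1 ≠ p.2 := (Finset.mem_filter.mp hp).2
    rw [← hpc]
    exact dist_pos.mpr hne
  refine ⟨c, hcpos, ?_⟩
  intro V hVF hV2
  obtain ⟨u, hu⟩ := Finset.card_pos.mp (by omega : 0 < V.card)
  obtain ⟨v, hv, hvu⟩ := exists_ne_of_two_le_card hV2 hu
  calc c ≤ dist v u := Finset.min'_le _ _ (Finset.mem_image.mpr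
        ⟨(v, u), Finset.mem_filter.mpr ⟨Finset.mem_product.mpr ⟨hVF hv, hVF hu⟩, hvu⟩, rfl⟩)
    _ ≤ Metric.diam (V : Set ℝ) := dist_le_diam_of_mem V.finite_toSet.isBounded hv hu

lemma continuous_rpow_exp {d : ℝ} (hd : 0 < d) : Continuous (fun s : ℝ => d ^ s) := by
  have h : (fun s : ℝ => d ^ s) = fun s => Real.exp (Real.log d * s) := by
    funext s; rw [Real.rpow_def_of_pos hd]
  rw [h]
  exact Real.continuous_exp.comp (continuous_const.mul continuous_id)

lemma dimfH_lt_one {F : Finset ℝ} (h4 : 4 ≤ F.card) : dimfH F < 1 := by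
  classical
  obtain ⟨U₀, hU₀cov, hU₀diam, hU₀sum, hnd⟩ := exists_good_cover rfl h4
  set D := Metric.diam (F : Set ℝ) with hDdef
  have hFne : F.Nonempty := Finset.card_pos.mp (by omega)
  have hD0 : 0 < D := lt_of_le_of_lt (nabla_nonneg F) hnd
  set C : Finset (Finset (Finset ℝ)) :=
    (F.powerset.powerset).filter (fun U => IsTwoCover F U ∧ coverDiam U = nablaF F) with hCdef
  have hCmem : ∀ U : Finset (Finset ℝ),
      (IsTwoCover F U ∧ coverDiam U = nablaF F) ↔ U ∈ C := by
    intro U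
    simp only [hCdef, Finset.mem_filter, Finset.mem_powerset]
    constructor
    · intro h'
      exact ⟨fun V hV => Finset.mem_powerset.mpr (h'.1.1 V hV), h'⟩
    · exact fun h' => h'.2
  have hCne : C.Nonempty := ⟨U₀, (hCmem U₀).mp ⟨hU₀cov, hU₀diam⟩⟩
  have hHH : ∀ s : ℝ, HH F s = C.inf' hCne (fun U => Hcov U s) := by
    intro s
    rw [Finset.inf'_eq_csInf_image]
    show sInf _ = sInf _
    congr 1
    ext hval
    simp only [Set.mem_setOf_eq, Set.mem_image, Finset.mem_coe]
    constructor
    · rintro ⟨U, hU1, hU2, rfl⟩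
      exact ⟨U, (hCmem U).mp ⟨hU1, hU2⟩, rfl⟩
    · rintro ⟨U, hU, rfl⟩
      obtain ⟨h1', h2'⟩ := (hCmem U).mpr hU
      exact ⟨U, h1', h2', rfl⟩
  -- min distance
  obtain ⟨c, hc0, hcd⟩ := exists_min_dist (F := F) (by omega)
  have hcnab : c ≤ nablaF F := by
    obtain ⟨V, hVU, _⟩ := hU₀cov.2.2 _ (hFne.choose_spec)
    calc c ≤ Metric.diam (V : Set ℝ) := hcd V (hU₀cov.1 V hVU) (hU₀cov.2.1 V hVU)
      _ ≤ coverDiam U₀ := diam_le_coverDiam hVU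
      _ = nablaF F := hU₀diam
  have hcD : c < D := lt_of_le_of_lt hcnab hnd
  set L := Real.log (D / c) with hL
  have hL0 : 0 < L := Real.log_pos ((one_lt_div hc0).mpr hcD)
  set t := min (1/2 : ℝ) (Real.log 2 / (2 * L)) with ht
  have ht0 : 0 < t := lt_min (by norm_num) (div_pos (Real.log_pos one_lt_two) (by linarith))
  have ht1 : t < 1 := lt_of_le_of_lt (min_le_left _ _) (by norm_num)
  have htL : t * L < Real.log 2 := by
    have h1 : t * L ≤ (Real.log 2 / (2 * L)) * L :=
      mul_le_mul_of_nonneg_right (min_le_right _ _) hL0.le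
    have h2 : (Real.log 2 / (2 * L)) * L = Real.log 2 / 2 := by
      field_simp
    have h3 : Real.log 2 / 2 < Real.log 2 := by
      have := Real.log_pos one_lt_two; linarith
    linarith
  have hDt : D ^ t < 2 * c ^ t := by
    have hsplit : D ^ t = (D / c) ^ t * c ^ t := by
      rw [← Real.mul_rpow (by positivity) hc0.le, div_mul_cancel₀ _ (ne_of_gt hc0)]
    have h1 : (D / c) ^ t < 2 := by
      rw [Real.rpow_def_of_pos (by positivity), ← Real.exp_log (by norm_num : (0:ℝ) < 2)]
      exact Real.exp_lt_exp.mpr (by rw [← hL]; linarith [htL])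
    rw [hsplit]
    exact mul_lt_mul_of_pos_right h1 (Real.rpow_pos_of_pos hc0 t)
  -- each valid cover has at least two members
  have hcard2 : ∀ U ∈ C, 2 ≤ U.card := by
    intro U hU
    obtain ⟨hUcov, hUdiam⟩ := (hCmem U).mpr hU
    by_contra hlt
    push_neg at hlt
    have hUne : U.Nonempty := by
      obtain ⟨V, hVU, _⟩ := hUcov.2.2 _ hFne.choose_spec
      exact ⟨V, hVU⟩
    have hU1 : U.card = 1 := by
      have := Finset.card_pos.mpr hUne; omega
    obtain ⟨V, hV⟩ := Finset.card_eq_one.mp hU1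
    have hVF : V = F := by
      apply Finset.Subset.antisymm (hUcov.1 V (hV ▸ Finset.mem_singleton_self V))
      intro a ha
      obtain ⟨W, hWU, haW⟩ := hUcov.2.2 a ha
      rw [hV, Finset.mem_singleton] at hWU
      exact hWU ▸ haW
    have : coverDiam U = D := by
      rw [hV, hVF, coverDiam]
      have hset : {r : ℝ | ∃ V' ∈ ({F} : Finset (Finset ℝ)), r = Metric.diam (V' : Set ℝ)}
          = {D} := by
        ext r; simp [hDdef, eq_comm]
      rw [hset, csSup_singleton]
    rw [hUdiam] at this
    exact absurd this (ne_of_lt hnd)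
  have hHHt : 2 * c ^ t ≤ HH F t := by
    rw [hHH t]
    apply Finset.le_inf' hCne
    intro U hU
    obtain ⟨hUcov, _⟩ := (hCmem U).mpr hU
    have h1 : ∀ V ∈ U, c ^ t ≤ Metric.diam (V : Set ℝ) ^ t := by
      intro V hV
      exact Real.rpow_le_rpow hc0.le (hcd V (hUcov.1 V hV) (hUcov.2.1 V hV)) ht0.le
    calc 2 * c ^ t ≤ (U.card : ℝ) * c ^ t := by
          apply mul_le_mul_of_nonneg_right _ (Real.rpow_pos_of_pos hc0 t).le
          exact_mod_cast hcard2 U hU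
      _ = ∑ _V ∈ U, c ^ t := by rw [Finset.sum_const, nsmul_eq_mul]
      _ ≤ ∑ V ∈ U, Metric.diam (V : Set ℝ) ^ t := Finset.sum_le_sum h1
      _ = Hcov U t := rfl
  -- continuity
  have hcont : Continuous (fun s : ℝ => C.inf' hCne (fun U => Hcov U s) - D ^ s) := by
    apply Continuous.sub
    · apply Continuous.finset_inf'_apply hCne
      intro U hU
      obtain ⟨hUcov, _⟩ := (hCmem U).mpr hU
      unfold Hcov
      apply continuous_finset_sum
      intro V hV
      exact continuous_rpow_exp (diam_finset_pos (hUcov.2.1 V hV))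
    · exact continuous_rpow_exp hD0
  set f : ℝ → ℝ := fun s => C.inf' hCne (fun U => Hcov U s) - D ^ s with hf
  have hft : 0 < f t := by
    have : 2 * c ^ t ≤ C.inf' hCne (fun U => Hcov U t) := by rw [← hHH t]; exact hHHt
    simp only [hf]
    linarith [hDt]
  have hf1 : f 1 < 0 := by
    have h1 : C.inf' hCne (fun U => Hcov U 1) ≤ Hcov U₀ 1 :=
      Finset.inf'_le _ ((hCmem U₀).mp ⟨hU₀cov, hU₀diam⟩)
    simp only [hf]
    rw [Real.rpow_one]
    linarith
  have hIvt := intermediate_value_Ioo' (le_of_lt ht1) hcont.continuousOn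
  have h0mem : (0:ℝ) ∈ Set.Ioo (f 1) (f t) := ⟨hf1, hft⟩
  obtain ⟨s₀, hs₀mem, hs₀⟩ := hIvt h0mem
  have hs₀sol : 0 < s₀ ∧ HH F s₀ = D ^ s₀ := by
    refine ⟨lt_trans ht0 hs₀mem.1, ?_⟩
    rw [hHH s₀]
    have : f s₀ = 0 := hs₀
    simp only [hf] at this
    linarith
  calc dimfH F ≤ s₀ := csInf_le ⟨0, fun s hs => hs.1.le⟩ hs₀sol
    _ < 1 := hs₀mem.2
end Aux4


namespace Aux5
open Aux Aux2 Aux3 FinDim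

variable {F : Finset ℝ}

section Three
variable (h : F.card = 3)
include h

lemma hu_pos : 0 < pt F h 1 - pt F h 0 := sub_pos.mpr (pt_lt h one_pos (by omega))
lemma hv_pos : 0 < pt F h 2 - pt F h 1 := sub_pos.mpr (pt_lt h one_lt_two (by omega))

lemma F_eq : F = {pt F h 0, pt F h 1, pt F h 2} := by
  ext y
  constructor
  · intro hy
    obtain ⟨i, hi, rfl⟩ := pt_surj h hy
    interval_cases i <;> simp [Finset.mem_insert]
  · intro hy
    rcases Finset.mem_insert.mp hy with rfl | hy
    · exact pt_mem h (by omega)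
    rcases Finset.mem_insert.mp hy with rfl | hy
    · exact pt_mem h (by omega)
    · rw [Finset.mem_singleton.mp hy]; exact pt_mem h (by omega)

lemma diam_eq : Metric.diam (F : Set ℝ) = (pt F h 1 - pt F h 0) + (pt F h 2 - pt F h 1) := by
  rw [diam_F h (by omega) (Finset.card_pos.mp (by omega))]
  ring

lemma cover0_isTwoCover :
    IsTwoCover F ({{pt F h 0, pt F h 1}, {pt F h 1, pt F h 2}} : Finset (Finset ℝ)) := by
  refine ⟨?_, ?_, ?_⟩
  · intro V hV
    rcases Finset.mem_insert.mp hV with rfl | hV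
    · intro z hz
      rcases Finset.mem_insert.mp hz with rfl | hz
      · exact pt_mem h (by omega)
      · rw [Finset.mem_singleton.mp hz]; exact pt_mem h (by omega)
    · rw [Finset.mem_singleton.mp hV]
      intro z hz
      rcases Finset.mem_insert.mp hz with rfl | hz
      · exact pt_mem h (by omega)
      · rw [Finset.mem_singleton.mp hz]; exact pt_mem h (by omega)
  · intro V hV
    rcases Finset.mem_insert.mp hV with rfl | hV
    · exact (pair_card h (by omega)).ge
    · rw [Finset.mem_singleton.mp hV]
      exact (pair_card (i := 1) h (by omega)).ge
  · intro a ha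
    obtain ⟨i, hi, rfl⟩ := pt_surj h ha
    interval_cases i
    · exact ⟨{pt F h 0, pt F h 1}, Finset.mem_insert_self _ _, Finset.mem_insert_self _ _⟩
    · exact ⟨{pt F h 0, pt F h 1}, Finset.mem_insert_self _ _,
        Finset.mem_insert_of_mem (Finset.mem_singleton_self _)⟩
    · exact ⟨{pt F h 1, pt F h 2}, Finset.mem_insert_of_mem (Finset.mem_singleton_self _),
        Finset.mem_insert_of_mem (Finset.mem_singleton_self _)⟩

lemma cover0_coverDiam :
    coverDiam ({{pt F h 0, pt F h 1}, {pt F h 1, pt F h 2}} : Finset (Finset ℝ))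
      = max (pt F h 1 - pt F h 0) (pt F h 2 - pt F h 1) := by
  have hset : {r : ℝ | ∃ V ∈ ({{pt F h 0, pt F h 1}, {pt F h 1, pt F h 2}} : Finset (Finset ℝ)),
      r = Metric.diam (V : Set ℝ)}
      = {pt F h 1 - pt F h 0, pt F h 2 - pt F h 1} := by
    ext r
    simp only [Set.mem_setOf_eq, Finset.mem_insert, Finset.mem_singleton, Set.mem_insert_iff,
      Set.mem_singleton_iff]
    constructor
    · rintro ⟨V, hV | hV, rfl⟩
      · left; rw [hV]; exact pair_diam h (by omega)
      · right; rw [hV]; exact pair_diam (i := 1) h (by omega)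
    · rintro (rfl | rfl)
      · exact ⟨{pt F h 0, pt F h 1}, Or.inl rfl, (pair_diam h (by omega)).symm⟩
      · exact ⟨{pt F h 1, pt F h 2}, Or.inr rfl, (pair_diam (i := 1) h (by omega)).symm⟩
  rw [coverDiam, hset, csSup_pair]

lemma nabla_eq : nablaF F = max (pt F h 1 - pt F h 0) (pt F h 2 - pt F h 1) := by
  apply le_antisymm
  · rw [← cover0_coverDiam h]
    exact nabla_le_coverDiam (cover0_isTwoCover h)
  · apply max_le
    · apply nabla_ge (by omega) (pt_mem h (by omega : (0:ℕ) < 3))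
      intro z hz hzne
      obtain ⟨j, hj, rfl⟩ := pt_surj h hz
      have hj0 : j ≠ 0 := fun e => hzne (by rw [e])
      rw [dist_comm, Real.dist_eq,
        abs_of_nonneg (sub_nonneg.mpr (pt_le h (by omega) hj))]
      have := pt_le h (show 1 ≤ j by omega) hj
      linarith
    · apply nabla_ge (by omega) (pt_mem h (by omega : (2:ℕ) < 3))
      intro z hz hzne
      obtain ⟨j, hj, rfl⟩ := pt_surj h hz
      have hj2 : j ≠ 2 := fun e => hzne (by rw [e])
      rw [dist_comm, Real.dist_eq,
        abs_of_nonpos (sub_nonpos.mpr (pt_le h (by omega) (by omega)))]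
      have := pt_le h (show j ≤ 1 by omega) (by omega)
      linarith

lemma cover_classify {U : Finset (Finset ℝ)} (hU : IsTwoCover F U)
    (hUd : coverDiam U = nablaF F) :
    U = ({{pt F h 0, pt F h 1}, {pt F h 1, pt F h 2}} : Finset (Finset ℝ)) := by
  have hu := hu_pos h
  have hv := hv_pos h
  have hmax : nablaF F < (pt F h 2 - pt F h 0) := by
    rw [nabla_eq h]
    apply max_lt <;> linarith
  have hmem : ∀ V ∈ U, V = {pt F h 0, pt F h 1} ∨ V = {pt F h 1, pt F h 2} := by
    intro V hV
    have hVsub : V ⊆ F := hU.1 V hV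
    have hVcard : 2 ≤ V.card := hU.2.1 V hV
    have hno : ¬ (pt F h 0 ∈ V ∧ pt F h 2 ∈ V) := by
      rintro ⟨h0, h2⟩
      have : dist (pt F h 0) (pt F h 2) ≤ Metric.diam (V : Set ℝ) :=
        dist_le_diam_of_mem V.finite_toSet.isBounded h0 h2
      rw [Real.dist_eq, abs_of_nonpos (by linarith [pt_lt h (show (0:ℕ)<2 by omega) (show (2:ℕ)<3 by omega)])] at this
      have hle := diam_le_coverDiam hV
      rw [hUd] at hle
      linarith
    by_cases h0 : pt F h 0 ∈ V
    · left
      have h2 : pt F h 2 ∉ V := fun hc => hno ⟨h0, hc⟩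
      have hsub : V ⊆ {pt F h 0, pt F h 1} := by
        intro w hw
        have hwF : w ∈ F := hVsub hw
        rw [F_eq h] at hwF
        rcases Finset.mem_insert.mp hwF with rfl | hwF
        · exact Finset.mem_insert_self _ _
        rcases Finset.mem_insert.mp hwF with rfl | hwF
        · exact Finset.mem_insert_of_mem (Finset.mem_singleton_self _)
        · rw [Finset.mem_singleton.mp hwF] at hw; exact absurd hw h2
      exact (Finset.eq_of_subset_of_card_le hsub
        (le_trans (by rw [pair_card h (by omega)]) hVcard)).symm ▸ rfl
    · right
      have hsub : V ⊆ {pt F h 1, pt F h 2} := by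
        intro w hw
        have hwF : w ∈ F := hVsub hw
        rw [F_eq h] at hwF
        rcases Finset.mem_insert.mp hwF with rfl | hwF
        · exact absurd hw h0
        rcases Finset.mem_insert.mp hwF with rfl | hwF
        · exact Finset.mem_insert_self _ _
        · rw [Finset.mem_singleton.mp hwF]
          exact Finset.mem_insert_of_mem (Finset.mem_singleton_self _)
      exact (Finset.eq_of_subset_of_card_le hsub
        (le_trans (by rw [pair_card (i := 1) h (by omega)]) hVcard)).symm ▸ rfl
  apply Finset.Subset.antisymm
  · intro V hV
    rcases hmem V hV with rfl | rfl
    · exact Finset.mem_insert_self _ _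
    · exact Finset.mem_insert_of_mem (Finset.mem_singleton_self _)
  · have hne01 : pt F h 0 ≠ pt F h 1 := pt_ne h (by omega) (by omega) (by omega)
    have hne02 : pt F h 0 ≠ pt F h 2 := pt_ne h (by omega) (by omega) (by omega)
    have hne12 : pt F h 1 ≠ pt F h 2 := pt_ne h (by omega) (by omega) (by omega)
    have h01 : ({pt F h 0, pt F h 1} : Finset ℝ) ∈ U := by
      obtain ⟨V, hV, h0V⟩ := hU.2.2 (pt F h 0) (pt_mem h (by omega))
      rcases hmem V hV with rfl | rfl
      · exact hV
      · rcases Finset.mem_insert.mp h0V with he | he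
        · exact absurd he hne01
        · exact absurd (Finset.mem_singleton.mp he) hne02
    have h12 : ({pt F h 1, pt F h 2} : Finset ℝ) ∈ U := by
      obtain ⟨V, hV, h2V⟩ := hU.2.2 (pt F h 2) (pt_mem h (by omega))
      rcases hmem V hV with rfl | rfl
      · rcases Finset.mem_insert.mp h2V with he | he
        · exact absurd he.symm hne02
        · exact absurd (Finset.mem_singleton.mp he).symm hne12
      · exact hV
    intro V hV
    rcases Finset.mem_insert.mp hV with rfl | hV
    · exact h01
    · rw [Finset.mem_singleton.mp hV]; exact h12

lemma pair_ne : ({pt F h 0, pt F h 1} : Finset ℝ) ≠ {pt F h 1, pt F h 2} := by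
  intro he
  have h0 : pt F h 0 ∈ ({pt F h 1, pt F h 2} : Finset ℝ) := he ▸ Finset.mem_insert_self _ _
  rcases Finset.mem_insert.mp h0 with he' | he'
  · exact pt_ne h (by omega) (by omega) (by omega) he'
  · exact pt_ne h (by omega) (by omega) (by omega) (Finset.mem_singleton.mp he')

lemma Hcov0 (s : ℝ) :
    Hcov ({{pt F h 0, pt F h 1}, {pt F h 1, pt F h 2}} : Finset (Finset ℝ)) s
      = (pt F h 1 - pt F h 0) ^ s + (pt F h 2 - pt F h 1) ^ s := by
  rw [Hcov, Finset.sum_insert (by simp [pair_ne h]), Finset.sum_singleton,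
    pair_diam h (by omega), pair_diam (i := 1) h (by omega)]

lemma HH_eq (s : ℝ) : HH F s = (pt F h 1 - pt F h 0) ^ s + (pt F h 2 - pt F h 1) ^ s := by
  have hset : {hh : ℝ | ∃ U : Finset (Finset ℝ),
      IsTwoCover F U ∧ coverDiam U = nablaF F ∧ hh = Hcov U s}
      = {(pt F h 1 - pt F h 0) ^ s + (pt F h 2 - pt F h 1) ^ s} := by
    ext hh
    simp only [Set.mem_setOf_eq, Set.mem_singleton_iff]
    constructor
    · rintro ⟨U, hU1, hU2, rfl⟩
      rw [cover_classify h hU1 hU2, Hcov0 h]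
    · rintro rfl
      exact ⟨_, cover0_isTwoCover h, by rw [cover0_coverDiam h, nabla_eq h],
        (Hcov0 h s).symm⟩
  rw [HH, hset, csInf_singleton]

lemma sol_set_eq :
    {s : ℝ | 0 < s ∧ HH F s = Metric.diam (F : Set ℝ) ^ s} = {1} := by
  have hu := hu_pos h
  have hv := hv_pos h
  set u := pt F h 1 - pt F h 0
  set v := pt F h 2 - pt F h 1
  ext s
  simp only [Set.mem_setOf_eq, Set.mem_singleton_iff]
  constructor
  · rintro ⟨hs0, hs⟩
    rw [HH_eq h, diam_eq h] at hs
    -- u^s + v^s = (u+v)^s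
    have huv : 0 < u + v := by linarith
    set p := u / (u + v) with hp
    set q := v / (u + v) with hq
    have hp0 : 0 < p := div_pos hu huv
    have hp1 : p < 1 := (div_lt_one huv).mpr (by linarith)
    have hq0 : 0 < q := div_pos hv huv
    have hq1 : q < 1 := (div_lt_one huv).mpr (by linarith)
    have hanti : StrictAnti (fun t : ℝ => p ^ t + q ^ t) := by
      intro a b hab
      have h1 := Real.rpow_lt_rpow_of_exponent_gt hp0 hp1 hab
      have h2 := Real.rpow_lt_rpow_of_exponent_gt hq0 hq1 hab
      simp only
      linarith
    have hGs : p ^ s + q ^ s = 1 := by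
      rw [hp, hq, Real.div_rpow hu.le huv.le, Real.div_rpow hv.le huv.le,
        ← add_div, hs, div_self (ne_of_gt (Real.rpow_pos_of_pos huv s))]
    have hG1 : p ^ (1:ℝ) + q ^ (1:ℝ) = 1 := by
      rw [Real.rpow_one, Real.rpow_one, hp, hq, ← add_div, div_self (ne_of_gt huv)]
    exact hanti.injective (by rw [hGs, hG1])
  · rintro rfl
    refine ⟨one_pos, ?_⟩
    rw [HH_eq h, diam_eq h, Real.rpow_one, Real.rpow_one, Real.rpow_one]

lemma dimfH_eq : dimfH F = 1 := by
  rw [dimfH, sol_set_eq h, csInf_singleton]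

lemma Tmin_eq : Tmin F = 2 := by
  have hset : {m : ℕ | ∃ U : Finset (Finset ℝ),
      IsTwoCover F U ∧ coverDiam U = nablaF F ∧ U.card = m} = {2} := by
    ext m
    simp only [Set.mem_setOf_eq, Set.mem_singleton_iff]
    constructor
    · rintro ⟨U, hU1, hU2, rfl⟩
      rw [cover_classify h hU1 hU2]
      rw [Finset.card_insert_of_notMem (by simp [pair_ne h]), Finset.card_singleton]
    · rintro rfl
      refine ⟨_, cover0_isTwoCover h, by rw [cover0_coverDiam h, nabla_eq h], ?_⟩
      rw [Finset.card_insert_of_notMem (by simp [pair_ne h]), Finset.card_singleton]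
  rw [Tmin, hset, csInf_singleton]

lemma dimfB_ge : 1 ≤ dimfB F := by
  have hu := hu_pos h
  have hv := hv_pos h
  rw [dimfB, Tmin_eq h, diam_eq h, nabla_eq h]
  set u := pt F h 1 - pt F h 0
  set v := pt F h 2 - pt F h 1
  set w := max u v with hw
  have hw0 : 0 < w := lt_of_lt_of_le hu (le_max_left _ _)
  have hwlt : w < u + v := max_lt (by linarith) (by linarith)
  have hle2 : u + v ≤ 2 * w := by
    have h1 : u ≤ w := le_max_left _ _
    have h2 : v ≤ w := le_max_right _ _
    linarith
  have hlogpos : 0 < Real.log ((u + v) / w) := Real.log_pos ((one_lt_div hw0).mpr hwlt)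
  have hlogle : Real.log ((u + v) / w) ≤ Real.log 2 := by
    apply Real.log_le_log (by positivity)
    rw [div_le_iff₀ hw0]
    linarith
  rw [show ((2:ℕ):ℝ) = 2 by norm_num]
  rw [le_div_iff₀ hlogpos]
  linarith

lemma no_focal (a : ℝ) : ¬ IsFocal F a := by
  have hu := hu_pos h
  have hv := hv_pos h
  rintro ⟨haF, hfoc⟩
  obtain ⟨j, hj, rfl⟩ := pt_surj h haF
  rw [diam_eq h] at hfoc
  interval_cases j
  · have := hfoc (pt F h 1) (pt_mem h (by omega)) (pt_ne h (by omega) (by omega) (by omega))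
    rw [Real.dist_eq, abs_of_nonpos (by linarith)] at this
    linarith
  · have := hfoc (pt F h 0) (pt_mem h (by omega)) (pt_ne h (by omega) (by omega) (by omega))
    rw [Real.dist_eq, abs_of_nonneg (by linarith)] at this
    linarith
  · have := hfoc (pt F h 1) (pt_mem h (by omega)) (pt_ne h (by omega) (by omega) (by omega))
    rw [Real.dist_eq, abs_of_nonneg (by linarith)] at this
    linarith

end Three
end Aux5


open FinDim in
/-- For finite subsets of `ℝ`: with three points, `dim_fH = 1` and `dim_fB ≥ 1`;
with at least four points, `dim_fH < 1`. -/
theorem stmt12 (F : Finset ℝ) :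
    (F.card = 3 → (∀ a, ¬ IsFocal F a) ∧ dimfH F = 1 ∧ 1 ≤ dimfB F) ∧
    (4 ≤ F.card → (∀ a, ¬ IsFocal F a) ∧ dimfH F < 1) := by
  constructor
  · intro h3
    exact ⟨Aux5.no_focal h3, Aux5.dimfH_eq h3, Aux5.dimfB_ge h3⟩
  · intro h4
    exact ⟨Aux4.no_focal_of_four h4, Aux4.dimfH_lt_one h4⟩
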